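/- Let 𝔤 be an n-dimensional Lie algebra over a field K. Then 𝔤 admits a pre-Lie algebra structure if and only if there is an n-dimensional 𝔤-module M together with a bijective linear map I: 𝔤 → M satisfying the 1-cocycle condition I([x,y]) = x • I(y) − y • I(x) for all x,y ∈ 𝔤. -/

import Mathlib

/-- A bilinear product `x · y` on a Lie algebra `𝔤` is a pre-Lie algebra structure if
`[x,y] = x·y − y·x` and `[x,y]·z = x·(y·z) − y·(x·z)`. -/
def IsPreLieStructure {K L : Type*} [Field K] [LieRing L] [LieAlgebra K L]
    (mul : L →ₗ[K] L →ₗ[K] L) : Prop :=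
  (∀ x y : L, ⁅x, y⁆ = mul x y - mul y x) ∧
  (∀ x y z : L, mul ⁅x, y⁆ z = mul x (mul y z) - mul y (mul x z))

attribute [local instance 100] LieRing.ofAssociativeRing

/-- An `n`-dimensional Lie algebra `𝔤` admits a pre-Lie algebra structure if and only if
there is an `n`-dimensional `𝔤`-module `M` with a nonsingular (bijective) `1`-cocycle
`I : 𝔤 → M`, i.e. `I [x,y] = x • I y − y • I x`. -/
theorem preLie_iff_exists_nonsingular_one_cocycle
    (K : Type*) (L : Type*) [Field K] [LieRing L] [LieAlgebra K L]
    [FiniteDimensional K L] (n : ℕ) (hn : Module.finrank K L = n) :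
    (∃ mul : L →ₗ[K] L →ₗ[K] L, IsPreLieStructure mul) ↔
    (∃ ρ : L →ₗ⁅K⁆ Module.End K (Fin n → K), ∃ I : L ≃ₗ[K] (Fin n → K),
      ∀ x y : L, I ⁅x, y⁆ = ρ x (I y) - ρ y (I x)) := by
  obtain ⟨b⟩ : Nonempty (Module.Basis (Fin n) K L) := ⟨Module.finBasisOfFinrankEq K L hn⟩
  set e : L ≃ₗ[K] (Fin n → K) := b.equivFun with he
  constructor
  · rintro ⟨mul, h1, h2⟩
    refine ⟨{ toFun := fun x => e.conj (mul x)
              map_add' := by intro x y; simp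
              map_smul' := by intro c x; simp
              map_lie' := by
                intro x y
                refine LinearMap.ext fun v => ?_
                simp only [LinearEquiv.conj_apply_apply, Ring.lie_def,
                  LinearMap.sub_apply, Module.End.mul_apply,
                  LinearEquiv.symm_apply_apply, h2, map_sub] }, e, ?_⟩
    intro x y
    simp only [LieHom.coe_mk, LinearEquiv.conj_apply_apply,
      LinearEquiv.symm_apply_apply, h1, map_sub]
  · rintro ⟨ρ, I, hI⟩
    refine ⟨LinearMap.mk₂ K (fun x y => I.symm (ρ x (I y)))
      (by intro x y z; simp) (by intro c x y; simp)
      (by intro x y z; simp) (by intro c x y; simp), ?_, ?_⟩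
    · intro x y
      apply I.injective
      simp [hI]
    · intro x y z
      apply I.injective
      simp only [LinearMap.mk₂_apply, LinearEquiv.apply_symm_apply, map_sub,
        LieHom.map_lie, Ring.lie_def, LinearMap.sub_apply, Module.End.mul_apply]
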